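/- (i) If 𝓛 and 𝓛' are labels of different types (each of Type I, II, or III as defined in the context), then there is no order-embedding of 𝓛 into 𝓛'. (ii) If u, v ∈ U are distinct, then there is no order-embedding of the Type III label 𝓛*ᵤ into 𝓛*ᵥ. -/

import Mathlib

/-- The underlying set `κ` of the labels: the ordinals below `κ`. -/
abbrev KSet (κ : Cardinal) := {o : Ordinal // o < κ.ord}

/-- Domain of a label of type I: `κ ∪ {(α,β) : 0 < α < κ, β < α}`. -/
def D1 (κ : Cardinal) :=
  KSet κ ⊕ {p : KSet κ × KSet κ // 0 < (p.1).1 ∧ (p.2).1 < (p.1).1}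

/-- The partial order of a label of type I built from a linear order `L` on `κ`. -/
def ord1 {κ : Cardinal} (L : KSet κ → KSet κ → Prop) : D1 κ → D1 κ → Prop
  | .inl α, .inl α' => L α α'
  | .inl α', .inr p => L α' p.1.1
  | .inr p, .inr q => p.1.1 = q.1.1 ∧ (p.1.2).1 ≤ (q.1.2).1
  | .inr _, .inl _ => False

/-- Domain of a label of type II with parameter `θ`: the disjoint union of `θ`,
`ω* = {n* : n ∈ ω}` and the six-element set `{a, a⁺, a⁻, b, b⁺, b⁻}`
(coded as `Fin 6` via `a = 0, a⁺ = 1, a⁻ = 2, b = 3, b⁺ = 4, b⁻ = 5`). -/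
def D2 (θ : Ordinal) := {o : Ordinal // o < θ} ⊕ (ℕ ⊕ Fin 6)

/-- The partial order of a label of type II: ordinals in their usual order;
`n* ≤ m*` iff `n ≥ m`; `x ≤ x⁺, x⁻` for `x ∈ {a,b}`; every ordinal below every `n*`,
every `n*` below every element of the six-element set. -/
def ord2 {θ : Ordinal} : D2 θ → D2 θ → Prop
  | .inl α, .inl β => α.1 ≤ β.1
  | .inl _, .inr _ => True
  | .inr (.inl n), .inr (.inl m) => m ≤ n
  | .inr (.inl _), .inr (.inr _) => True
  | .inr (.inr x), .inr (.inr y) =>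
      x = y ∨ (x = 0 ∧ (y = 1 ∨ y = 2)) ∨ (x = 3 ∧ (y = 4 ∨ y = 5))
  | _, _ => False

/-- Domain of a label of type III: `κ ∪ {c} ∪ {(α,β) : 0 < α < κ, β < α}`. -/
def D3 (κ : Cardinal) :=
  KSet κ ⊕ (Unit ⊕ {p : KSet κ × KSet κ // 0 < (p.1).1 ∧ (p.2).1 < (p.1).1})

/-- The partial order of a label of type III built from a linear order `L` on `κ`:
like type I, with one extra point `c` above the minimum `0` and incomparable with
every other element. -/
def ord3 {κ : Cardinal} (L : KSet κ → KSet κ → Prop) : D3 κ → D3 κ → Prop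
  | .inl α, .inl α' => L α α'
  | .inl α, .inr (.inl _) => α.1 = 0
  | .inr (.inl _), .inr (.inl _) => True
  | .inl α', .inr (.inr p) => L α' p.1.1
  | .inr (.inr p), .inr (.inr q) => p.1.1 = q.1.1 ∧ (p.1.2).1 ≤ (q.1.2).1
  | _, _ => False

/-- An order-embedding of the relation `r` into the relation `r'`: an injection `f`
with `r x y ↔ r' (f x) (f y)`. -/
def RelEmb {A B : Type*} (r : A → A → Prop) (r' : B → B → Prop) : Prop :=
  ∃ f : A → B, Function.Injective f ∧ ∀ x y : A, r x y ↔ r' (f x) (f y)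

universe u

open Cardinal in
lemma noInj2 {κ : Cardinal.{u}} (hunc : Cardinal.aleph0 < κ) {θ : Ordinal.{u}} (hθ : θ < κ.ord)
    (g : KSet κ → D2 θ) : ¬ Function.Injective g := by
  intro hg
  have h1 : #(KSet κ) ≤ #(D2 θ) := Cardinal.mk_le_of_injective hg
  have h2 : #(KSet κ) = Cardinal.lift.{u+1} κ := by
    have := Ordinal.mk_Iio_ordinal κ.ord
    rw [Cardinal.card_ord] at this
    exact this
  have h3 : #(D2 θ) ≤ Cardinal.lift.{u+1} (θ.card + Cardinal.aleph0) := by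
    rw [show D2 θ = ({o : Ordinal // o < θ} ⊕ (ℕ ⊕ Fin 6)) from rfl, Cardinal.mk_sum]
    rw [Cardinal.lift_add]
    gcongr
    · rw [show #{o : Ordinal // o < θ} = #(Set.Iio θ) from rfl, Ordinal.mk_Iio_ordinal]
      simp
    · have : #(ℕ ⊕ Fin 6) ≤ Cardinal.aleph0 := Cardinal.mk_le_aleph0
      simpa using Cardinal.lift_le.mpr this
  have h4 : θ.card + Cardinal.aleph0 < κ :=
    Cardinal.add_lt_of_lt hunc.le (Cardinal.lt_ord.mp hθ) hunc
  have := (h2 ▸ h1).trans h3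
  exact absurd this (not_le.mpr (Cardinal.lift_lt.mpr h4))

/-- In `ord1`, an element below two incomparable elements is an `inl`. -/
lemma below_incomp1 {κ : Cardinal} {L : KSet κ → KSet κ → Prop} {x y z : D1 κ}
    (hxy : ord1 L x y) (hxz : ord1 L x z) (hyz : ¬ ord1 L y z) (hzy : ¬ ord1 L z y) :
    ∃ α, x = Sum.inl α := by
  cases x with
  | inl α => exact ⟨α, rfl⟩
  | inr p =>
    cases y with
    | inl _ => simp [ord1] at hxy
    | inr q =>
      cases z with
      | inl _ => simp [ord1] at hxz
      | inr q' =>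
        obtain ⟨h1, _⟩ := hxy
        obtain ⟨h2, _⟩ := hxz
        have he : q.1.1 = q'.1.1 := h1 ▸ h2
        rcases le_total q.1.2.1 q'.1.2.1 with h | h
        · exact absurd ⟨he, h⟩ hyz
        · exact absurd ⟨he.symm, h⟩ hzy

/-- In `ord3`, an element below two incomparable elements is an `inl`. -/
lemma below_incomp3 {κ : Cardinal} {L : KSet κ → KSet κ → Prop} {x y z : D3 κ}
    (hxy : ord3 L x y) (hxz : ord3 L x z) (hyz : ¬ ord3 L y z) (hzy : ¬ ord3 L z y) :
    ∃ α, x = Sum.inl α := by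
  cases x with
  | inl α => exact ⟨α, rfl⟩
  | inr w =>
    cases w with
    | inl c =>
      cases y with
      | inl _ => simp [ord3] at hxy
      | inr wy =>
        cases wy with
        | inr _ => simp [ord3] at hxy
        | inl _ =>
          cases z with
          | inl _ => simp [ord3] at hxz
          | inr wz =>
            cases wz with
            | inr _ => simp [ord3] at hxz
            | inl _ => exact absurd trivial hyz
    | inr p =>
      cases y with
      | inl _ => simp [ord3] at hxy
      | inr wy =>
        cases wy with
        | inl _ => simp [ord3] at hxy
        | inr q =>
          cases z with
          | inl _ => simp [ord3] at hxz
          | inr wz =>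
            cases wz with
            | inl _ => simp [ord3] at hxz
            | inr q' =>
              obtain ⟨h1, _⟩ := hxy
              obtain ⟨h2, _⟩ := hxz
              have he : q.1.1 = q'.1.1 := h1 ▸ h2
              rcases le_total q.1.2.1 q'.1.2.1 with h | h
              · exact absurd ⟨he, h⟩ hyz
              · exact absurd ⟨he.symm, h⟩ hzy

/-- Above any point of a linear order with no maximal element there are two
distinct points with nonzero value. -/
lemma two_above {κ : Cardinal} {L : KSet κ → KSet κ → Prop}
    (hL : IsLinearOrder (KSet κ) L) (hnomax : ∀ x, ∃ y, x ≠ y ∧ L x y) (α : KSet κ) :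
    ∃ β₁ β₂ : KSet κ, β₁.1 ≠ β₂.1 ∧ 0 < β₁.1 ∧ 0 < β₂.1 ∧ L α β₁ ∧ L α β₂ := by
  haveI := hL
  obtain ⟨γ₁, hne1, h1⟩ := hnomax α
  obtain ⟨γ₂, hne2, h2⟩ := hnomax γ₁
  obtain ⟨γ₃, hne3, h3⟩ := hnomax γ₂
  have h13 : γ₁ ≠ γ₃ := by
    rintro rfl
    exact hne2 (antisymm h3 h2).symm
  have hval : ∀ a b : KSet κ, a ≠ b → a.1 ≠ b.1 := fun a b h h' => h (Subtype.ext h')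
  have hα2 : L α γ₂ := _root_.trans h1 h2
  have hα3 : L α γ₃ := _root_.trans hα2 h3
  by_cases hz1 : γ₁.1 = 0
  · refine ⟨γ₂, γ₃, hval _ _ hne3, ?_, ?_, hα2, hα3⟩
    · exact pos_iff_ne_zero.mpr (fun h => hval _ _ hne2 (hz1.trans h.symm))
    · exact pos_iff_ne_zero.mpr (fun h => hval _ _ h13 (hz1.trans h.symm))
  by_cases hz2 : γ₂.1 = 0
  · refine ⟨γ₁, γ₃, hval _ _ h13, pos_iff_ne_zero.mpr hz1, ?_, h1, hα3⟩
    exact pos_iff_ne_zero.mpr (fun h => hval _ _ hne3 (hz2.trans h.symm))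
  · exact ⟨γ₁, γ₂, hval _ _ hne2, pos_iff_ne_zero.mpr hz1,
      pos_iff_ne_zero.mpr hz2, h1, hα2⟩

/-- In `ord1` (from a linear order with no max), each `inl α` lies below two
incomparable elements. -/
lemma inl_below_incomp1 {κ : Cardinal} {L : KSet κ → KSet κ → Prop} (h0 : (0:Ordinal) < κ.ord)
    (hL : IsLinearOrder (KSet κ) L) (hnomax : ∀ x, ∃ y, x ≠ y ∧ L x y) (α : KSet κ) :
    ∃ y z : D1 κ, ord1 L (.inl α) y ∧ ord1 L (.inl α) z ∧ ¬ ord1 L y z ∧ ¬ ord1 L z y := by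
  obtain ⟨β₁, β₂, hne, hp1, hp2, hl1, hl2⟩ := two_above hL hnomax α
  refine ⟨.inr ⟨(β₁, ⟨0, h0⟩), hp1, hp1⟩, .inr ⟨(β₂, ⟨0, h0⟩), hp2, hp2⟩, hl1, hl2, ?_, ?_⟩
  · rintro ⟨h, -⟩; exact hne (congrArg Subtype.val h)
  · rintro ⟨h, -⟩; exact hne (congrArg Subtype.val h).symm

/-- Same for `ord3`. -/
lemma inl_below_incomp3 {κ : Cardinal} {L : KSet κ → KSet κ → Prop} (h0 : (0:Ordinal) < κ.ord)
    (hL : IsLinearOrder (KSet κ) L) (hnomax : ∀ x, ∃ y, x ≠ y ∧ L x y) (α : KSet κ) :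
    ∃ y z : D3 κ, ord3 L (.inl α) y ∧ ord3 L (.inl α) z ∧ ¬ ord3 L y z ∧ ¬ ord3 L z y := by
  obtain ⟨β₁, β₂, hne, hp1, hp2, hl1, hl2⟩ := two_above hL hnomax α
  refine ⟨.inr (.inr ⟨(β₁, ⟨0, h0⟩), hp1, hp1⟩), .inr (.inr ⟨(β₂, ⟨0, h0⟩), hp2, hp2⟩),
    hl1, hl2, ?_, ?_⟩
  · rintro ⟨h, -⟩; exact hne (congrArg Subtype.val h)
  · rintro ⟨h, -⟩; exact hne (congrArg Subtype.val h).symm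

/-- An embedding of `ord1 L` into `ord3 L'` restricts to an embedding of `L` into `L'`. -/
lemma restr13 {κ : Cardinal} {L L' : KSet κ → KSet κ → Prop} (h0 : (0:Ordinal) < κ.ord)
    (hL : IsLinearOrder (KSet κ) L) (hnomax : ∀ x, ∃ y, x ≠ y ∧ L x y)
    (h : RelEmb (ord1 L) (ord3 L')) : RelEmb L L' := by
  obtain ⟨f, hinj, hf⟩ := h
  have key : ∀ α : KSet κ, ∃ β, f (.inl α) = Sum.inl β := by
    intro α
    obtain ⟨y, z, hy, hz, hyz, hzy⟩ := inl_below_incomp1 h0 hL hnomax α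
    exact below_incomp3 ((hf _ _).mp hy) ((hf _ _).mp hz)
      (fun hc => hyz ((hf _ _).mpr hc)) (fun hc => hzy ((hf _ _).mpr hc))
  choose g hg using key
  refine ⟨g, fun a b hab => ?_, fun a b => ?_⟩
  · have : f (.inl a) = f (.inl b) := by rw [hg a, hg b, hab]
    exact Sum.inl.inj (hinj this)
  · have := hf (.inl a) (.inl b)
    rw [hg a, hg b] at this
    exact this
/-- An embedding of `ord3 L` into `ord1 L'` restricts to an embedding of `L` into `L'`. -/
lemma restr31 {κ : Cardinal} {L L' : KSet κ → KSet κ → Prop} (h0 : (0:Ordinal) < κ.ord)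
    (hL : IsLinearOrder (KSet κ) L) (hnomax : ∀ x, ∃ y, x ≠ y ∧ L x y)
    (h : RelEmb (ord3 L) (ord1 L')) : RelEmb L L' := by
  obtain ⟨f, hinj, hf⟩ := h
  have key : ∀ α : KSet κ, ∃ β, f (.inl α) = Sum.inl β := by
    intro α
    obtain ⟨y, z, hy, hz, hyz, hzy⟩ := inl_below_incomp3 h0 hL hnomax α
    exact below_incomp1 ((hf _ _).mp hy) ((hf _ _).mp hz)
      (fun hc => hyz ((hf _ _).mpr hc)) (fun hc => hzy ((hf _ _).mpr hc))
  choose g hg using key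
  refine ⟨g, fun a b hab => ?_, fun a b => ?_⟩
  · have : f (.inl a) = f (.inl b) := by rw [hg a, hg b, hab]
    exact Sum.inl.inj (hinj this)
  · have := hf (.inl a) (.inl b)
    rw [hg a, hg b] at this
    exact this
/-- An embedding of `ord3 L` into `ord3 L'` restricts to an embedding of `L` into `L'`. -/
lemma restr33 {κ : Cardinal} {L L' : KSet κ → KSet κ → Prop} (h0 : (0:Ordinal) < κ.ord)
    (hL : IsLinearOrder (KSet κ) L) (hnomax : ∀ x, ∃ y, x ≠ y ∧ L x y)
    (h : RelEmb (ord3 L) (ord3 L')) : RelEmb L L' := by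
  obtain ⟨f, hinj, hf⟩ := h
  have key : ∀ α : KSet κ, ∃ β, f (.inl α) = Sum.inl β := by
    intro α
    obtain ⟨y, z, hy, hz, hyz, hzy⟩ := inl_below_incomp3 h0 hL hnomax α
    exact below_incomp3 ((hf _ _).mp hy) ((hf _ _).mp hz)
      (fun hc => hyz ((hf _ _).mpr hc)) (fun hc => hzy ((hf _ _).mpr hc))
  choose g hg using key
  refine ⟨g, fun a b hab => ?_, fun a b => ?_⟩
  · have : f (.inl a) = f (.inl b) := by rw [hg a, hg b, hab]
    exact Sum.inl.inj (hinj this)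
  · have := hf (.inl a) (.inl b)
    rw [hg a, hg b] at this
    exact this

/-- No embedding of `ord2` into `ord1`. -/
lemma not21 {κ : Cardinal} {θ : Ordinal} {L : KSet κ → KSet κ → Prop}
    (hL : IsLinearOrder (KSet κ) L) : ¬ RelEmb (ord2 (θ := θ)) (ord1 L) := by
  haveI := hL
  rintro ⟨f, hinj, hf⟩
  set a : D2 θ := .inr (.inr 0) with ha
  set b : D2 θ := .inr (.inr 3) with hb
  obtain ⟨α₁, hα₁⟩ := below_incomp1 (x := f a) (y := f (.inr (.inr 1))) (z := f (.inr (.inr 2)))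
    ((hf _ _).mp (by simp [ord2, ha])) ((hf _ _).mp (by simp [ord2, ha]))
    (fun hc => by have := (hf _ _).mpr hc; simp [ord2] at this)
    (fun hc => by have := (hf _ _).mpr hc; simp [ord2] at this)
  obtain ⟨α₂, hα₂⟩ := below_incomp1 (x := f b) (y := f (.inr (.inr 4))) (z := f (.inr (.inr 5)))
    ((hf _ _).mp (by simp [ord2, hb])) ((hf _ _).mp (by simp [ord2, hb]))
    (fun hc => by have := (hf _ _).mpr hc; simp [ord2] at this)
    (fun hc => by have := (hf _ _).mpr hc; simp [ord2] at this)
  rcases total_of L α₁ α₂ with h | h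
  · have : ord1 L (f a) (f b) := by rw [hα₁, hα₂]; exact h
    have := (hf _ _).mpr this
    simp [ord2, ha, hb] at this
  · have : ord1 L (f b) (f a) := by rw [hα₁, hα₂]; exact h
    have := (hf _ _).mpr this
    simp [ord2, ha, hb] at this

/-- No embedding of `ord2` into `ord3`. -/
lemma not23 {κ : Cardinal} {θ : Ordinal} {L : KSet κ → KSet κ → Prop}
    (hL : IsLinearOrder (KSet κ) L) : ¬ RelEmb (ord2 (θ := θ)) (ord3 L) := by
  haveI := hL
  rintro ⟨f, hinj, hf⟩
  set a : D2 θ := .inr (.inr 0) with ha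
  set b : D2 θ := .inr (.inr 3) with hb
  obtain ⟨α₁, hα₁⟩ := below_incomp3 (x := f a) (y := f (.inr (.inr 1))) (z := f (.inr (.inr 2)))
    ((hf _ _).mp (by simp [ord2, ha])) ((hf _ _).mp (by simp [ord2, ha]))
    (fun hc => by have := (hf _ _).mpr hc; simp [ord2] at this)
    (fun hc => by have := (hf _ _).mpr hc; simp [ord2] at this)
  obtain ⟨α₂, hα₂⟩ := below_incomp3 (x := f b) (y := f (.inr (.inr 4))) (z := f (.inr (.inr 5)))
    ((hf _ _).mp (by simp [ord2, hb])) ((hf _ _).mp (by simp [ord2, hb]))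
    (fun hc => by have := (hf _ _).mpr hc; simp [ord2] at this)
    (fun hc => by have := (hf _ _).mpr hc; simp [ord2] at this)
  rcases total_of L α₁ α₂ with h | h
  · have : ord3 L (f a) (f b) := by rw [hα₁, hα₂]; exact h
    have := (hf _ _).mpr this
    simp [ord2, ha, hb] at this
  · have : ord3 L (f b) (f a) := by rw [hα₁, hα₂]; exact h
    have := (hf _ _).mpr this
    simp [ord2, ha, hb] at this

/-- Let `κ` be regular uncountable; fix linear orders `L γ` (`γ < κ`) and `L* u`
(`u ∈ U`) on `κ`, each with minimum `0` and no maximal element, no member of the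
family embedding into a different member.  Then (i) labels of different types never
embed into one another, and (ii) for `u ≠ v` the type III label of `u` does not embed
into the type III label of `v`. -/
theorem stmt5 (κ : Cardinal) (hreg : κ.IsRegular) (hunc : Cardinal.aleph0 < κ)
    (h0 : (0 : Ordinal) < κ.ord)
    (U : Type*) (L : KSet κ → (KSet κ → KSet κ → Prop)) (Ls : U → (KSet κ → KSet κ → Prop))
    (hL : ∀ γ, IsLinearOrder (KSet κ) (L γ)) (hLs : ∀ u, IsLinearOrder (KSet κ) (Ls u))
    (hLmin : ∀ γ x, L γ ⟨0, h0⟩ x) (hLsmin : ∀ u x, Ls u ⟨0, h0⟩ x)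
    (hLnomax : ∀ γ x, ∃ y, x ≠ y ∧ L γ x y) (hLsnomax : ∀ u x, ∃ y, x ≠ y ∧ Ls u x y)
    (hLL : ∀ γ γ', γ ≠ γ' → ¬ RelEmb (L γ) (L γ'))
    (hLsLs : ∀ u u', u ≠ u' → ¬ RelEmb (Ls u) (Ls u'))
    (hLLs : ∀ γ u, ¬ RelEmb (L γ) (Ls u))
    (hLsL : ∀ u γ, ¬ RelEmb (Ls u) (L γ)) :
    ((∀ γ (θ : Ordinal), θ < κ.ord →
        ¬ RelEmb (ord1 (L γ)) (ord2 (θ := θ)) ∧ ¬ RelEmb (ord2 (θ := θ)) (ord1 (L γ))) ∧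
      (∀ γ u, ¬ RelEmb (ord1 (L γ)) (ord3 (Ls u)) ∧ ¬ RelEmb (ord3 (Ls u)) (ord1 (L γ))) ∧
      (∀ (θ : Ordinal), θ < κ.ord → ∀ u,
        ¬ RelEmb (ord2 (θ := θ)) (ord3 (Ls u)) ∧ ¬ RelEmb (ord3 (Ls u)) (ord2 (θ := θ)))) ∧
    (∀ u v : U, u ≠ v → ¬ RelEmb (ord3 (Ls u)) (ord3 (Ls v))) := by
  refine ⟨⟨?_, ?_, ?_⟩, ?_⟩
  · intro γ θ hθ
    refine ⟨?_, not21 (hL γ)⟩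
    rintro ⟨f, hinj, -⟩
    exact noInj2 hunc hθ (fun α => f (.inl α)) (fun a b h => Sum.inl.inj (hinj h))
  · intro γ u
    exact ⟨fun h => hLLs γ u (restr13 h0 (hL γ) (hLnomax γ) h),
           fun h => hLsL u γ (restr31 h0 (hLs u) (hLsnomax u) h)⟩
  · intro θ hθ u
    refine ⟨not23 (hLs u), ?_⟩
    rintro ⟨f, hinj, -⟩
    exact noInj2 hunc hθ (fun α => f (.inl α)) (fun a b h => Sum.inl.inj (hinj h))
  · intro u v huv h
    exact hLsLs u v huv (restr33 h0 (hLs u) (hLsnomax u) h)
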